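/- Let F be a class of measurable functions from a measurable space E to [−1,1], separable in the product topology, and let N = n + m ≥ 2. For z = (z_1,…,z_N) ∈ E^N define v_+(z) = sup_{f∈F} Σ_{i=1}^{N} ( f(z_i) − (1/N) Σ_{j=1}^{N} f(z_j) )². Then the function v_+/4 : E^N → ℝ is (2,0)-self-bounding. -/

import Mathlib

open MeasureTheory

/-- A function `f : E^N → ℝ` is `(a,b)`-self-bounding if for every coordinate `i` there is a
function `gᵢ` not depending on the `i`-th coordinate such that `0 ≤ f x − gᵢ x ≤ 1` for all `x`
and `∑ i (f x − gᵢ x) ≤ a f x + b`. -/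
def SelfBounding {E : Type*} {N : ℕ} (a b : ℝ) (f : (Fin N → E) → ℝ) : Prop :=
  ∃ g : Fin N → (Fin N → E) → ℝ,
    (∀ i, ∀ x y : Fin N → E, (∀ j, j ≠ i → x j = y j) → g i x = g i y) ∧
    (∀ i, ∀ x, 0 ≤ f x - g i x ∧ f x - g i x ≤ 1) ∧
    (∀ x, ∑ i, (f x - g i x) ≤ a * f x + b)

open Finset in
lemma sum_pair_sq {N : ℕ} (b : Fin N → ℝ) :
    ∑ k, ∑ l, (b k - b l) ^ 2
      = 2 * N * ∑ k, (b k) ^ 2 - 2 * (∑ k, b k) ^ 2 := by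
  have h : ∀ k l : Fin N, (b k - b l) ^ 2 = (b k) ^ 2 + (b l) ^ 2 - 2 * (b k * b l) :=
    fun k l => by ring
  simp_rw [h, Finset.sum_sub_distrib, Finset.sum_add_distrib, Finset.sum_const,
    ← Finset.mul_sum, ← Finset.sum_mul, Finset.card_univ, Fintype.card_fin, nsmul_eq_mul]
  rw [← Finset.mul_sum]
  ring

lemma var_identity {N : ℕ} (hN : (N : ℝ) ≠ 0) (a : Fin N → ℝ) :
    ∑ i, (a i - (1 / (N : ℝ)) * ∑ j, a j) ^ 2
      = (1 / (2 * (N : ℝ))) * ∑ k, ∑ l, (a k - a l) ^ 2 := by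
  set m := (1 / (N : ℝ)) * ∑ j, a j with hm
  have hb : ∑ k, (a k - m) = 0 := by
    rw [Finset.sum_sub_distrib, Finset.sum_const, Finset.card_univ, Fintype.card_fin, hm]
    rw [nsmul_eq_mul]
    field_simp
    ring
  have key : ∀ k l : Fin N, a k - a l = (a k - m) - (a l - m) := fun k l => by ring
  calc ∑ i, (a i - m) ^ 2
      = (1 / (2 * (N : ℝ))) * (2 * N * ∑ i, (a i - m) ^ 2 - 2 * (∑ i, (a i - m)) ^ 2) := by
        rw [hb]; field_simp; ring
    _ = (1 / (2 * (N : ℝ))) * ∑ k, ∑ l, ((a k - m) - (a l - m)) ^ 2 := by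
        rw [sum_pair_sq]
    _ = (1 / (2 * (N : ℝ))) * ∑ k, ∑ l, (a k - a l) ^ 2 := by simp_rw [← key]

noncomputable def Sfull {E : Type*} {N : ℕ} (f : E → ℝ) (z : Fin N → E) : ℝ :=
  ∑ k, ∑ l, (f (z k) - f (z l)) ^ 2

noncomputable def Tsub {E : Type*} {N : ℕ} (i : Fin N) (f : E → ℝ) (z : Fin N → E) : ℝ :=
  ∑ k ∈ Finset.univ.erase i, ∑ l ∈ Finset.univ.erase i, (f (z k) - f (z l)) ^ 2

lemma Sfull_decomp {E : Type*} {N : ℕ} (i : Fin N) (f : E → ℝ) (z : Fin N → E) :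
    Sfull f z = Tsub i f z + (∑ k ∈ Finset.univ.erase i, (f (z k) - f (z i)) ^ 2)
      + ∑ l, (f (z i) - f (z l)) ^ 2 := by
  unfold Sfull Tsub
  rw [← Finset.sum_erase_add (Finset.univ) _ (Finset.mem_univ i)]
  congr 1
  have h : ∀ k ∈ Finset.univ.erase i, (∑ l, (f (z k) - f (z l)) ^ 2)
      = (∑ l ∈ Finset.univ.erase i, (f (z k) - f (z l)) ^ 2) + (f (z k) - f (z i)) ^ 2 :=
    fun k _ => (Finset.sum_erase_add _ _ (Finset.mem_univ i)).symm
  rw [Finset.sum_congr rfl h, Finset.sum_add_distrib]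

lemma sum_Tsub {E : Type*} {N : ℕ} (f : E → ℝ) (z : Fin N → E) :
    ∑ i, (Sfull f z - Tsub (E := E) i f z) = 2 * Sfull f z := by
  have h : ∀ i : Fin N, Sfull f z - Tsub i f z
      = (∑ k ∈ Finset.univ.erase i, (f (z k) - f (z i)) ^ 2)
        + ∑ l, (f (z i) - f (z l)) ^ 2 := by
    intro i; rw [Sfull_decomp i f z]; ring
  simp_rw [h]
  rw [Finset.sum_add_distrib]
  have h1 : ∀ i : Fin N, (∑ k ∈ Finset.univ.erase i, (f (z k) - f (z i)) ^ 2)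
      = ∑ k, (f (z k) - f (z i)) ^ 2 := by
    intro i
    exact Finset.sum_erase _ (by simp)
  have h2 : ∑ i, ∑ k, (f (z k) - f (z i)) ^ 2 = Sfull f z := by
    rw [Finset.sum_comm]
    rfl
  simp_rw [h1]
  rw [h2]
  unfold Sfull
  ring


/-- **The weak empirical variance is self-bounding** (Lemma SM.11). For a class `F` of
measurable `[-1,1]`-valued functions, separable in the product topology, and `N ≥ 2`, the
function `v₊/4` with `v₊(z) = sup_{f∈F} ∑ᵢ (f(zᵢ) − N⁻¹ ∑ⱼ f(zⱼ))²` is `(2,0)`-self-bounding. -/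
theorem weak_variance_selfBounding
    {E : Type*} [MeasurableSpace E] {N : ℕ} (hN : 2 ≤ N)
    (F : Set (E → ℝ))
    (hFmeas : ∀ f ∈ F, Measurable f)
    (hFrange : ∀ f ∈ F, ∀ e, f e ∈ Set.Icc (-1 : ℝ) 1)
    (hFsep : TopologicalSpace.IsSeparable F) :
    SelfBounding 2 0 (fun z : Fin N → E =>
      (⨆ f : F, ∑ i, ((f : E → ℝ) (z i) - (1 / (N : ℝ)) * ∑ j, (f : E → ℝ) (z j)) ^ 2) / 4) := by
  classical
  have hN0 : (0 : ℝ) < N := by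
    have : 0 < N := lt_of_lt_of_le (by norm_num) hN
    exact_mod_cast this
  have hNne : (N : ℝ) ≠ 0 := ne_of_gt hN0
  by_cases hF : Nonempty F
  case neg =>
    haveI : IsEmpty F := not_nonempty_iff.mp hF
    refine ⟨fun _ _ => 0, fun i x y _ => rfl, ?_, ?_⟩ <;>
      simp [Real.iSup_of_isEmpty]
  case pos =>
  haveI := hF
  -- basic term bound
  have hterm : ∀ (f : E → ℝ), f ∈ F → ∀ u v : E, (f u - f v) ^ 2 ≤ 4 := by
    intro f hf u v
    have h1 := hFrange f hf u
    have h2 := hFrange f hf v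
    have := sq_le_sq' (by linarith [h1.1, h1.2, h2.1, h2.2] : -(2:ℝ) ≤ f u - f v)
      (by linarith [h1.1, h1.2, h2.1, h2.2] : f u - f v ≤ 2)
    norm_num at this
    exact this
  -- key rewriting: the summand equals (1/(2N)) * Sfull
  have hQ : ∀ (f : E → ℝ) (z : Fin N → E),
      ∑ i, (f (z i) - (1 / (N : ℝ)) * ∑ j, f (z j)) ^ 2
        = (1 / (2 * (N : ℝ))) * Sfull f z :=
    fun f z => var_identity hNne (fun k => f (z k))
  -- bounds on Sfull, Tsub
  have hS_nonneg : ∀ (f : E → ℝ) (z : Fin N → E), 0 ≤ Sfull f z := by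
    intro f z
    exact Finset.sum_nonneg fun k _ => Finset.sum_nonneg fun l _ => sq_nonneg _
  have hT_nonneg : ∀ (i : Fin N) (f : E → ℝ) (z : Fin N → E), 0 ≤ Tsub i f z := by
    intro i f z
    exact Finset.sum_nonneg fun k _ => Finset.sum_nonneg fun l _ => sq_nonneg _
  have hT_le_S : ∀ (i : Fin N) (f : E → ℝ) (z : Fin N → E), Tsub i f z ≤ Sfull f z := by
    intro i f z
    refine Finset.sum_le_sum_of_subset_of_nonneg (Finset.erase_subset _ _) ?_ |>.trans ?_
    · intro k _ _
      exact Finset.sum_nonneg fun l _ => sq_nonneg _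
    · refine Finset.sum_le_sum fun k _ => ?_
      exact Finset.sum_le_sum_of_subset_of_nonneg (Finset.erase_subset _ _)
        fun l _ _ => sq_nonneg _
  have hS_le : ∀ (f : E → ℝ), f ∈ F → ∀ z : Fin N → E, Sfull f z ≤ 4 * N ^ 2 := by
    intro f hf z
    calc Sfull f z ≤ ∑ _k : Fin N, ∑ _l : Fin N, (4:ℝ) :=
          Finset.sum_le_sum fun k _ => Finset.sum_le_sum fun l _ => hterm f hf _ _
      _ = 4 * N ^ 2 := by simp [Finset.sum_const, Finset.card_univ]; ring
  have hS_le_T : ∀ (i : Fin N) (f : E → ℝ), f ∈ F → ∀ z : Fin N → E,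
      Sfull f z ≤ Tsub i f z + 8 * N := by
    intro i f hf z
    rw [Sfull_decomp i f z]
    have hb1 : (∑ k ∈ Finset.univ.erase i, (f (z k) - f (z i)) ^ 2) ≤ 4 * N := by
      calc _ ≤ ∑ k : Fin N, (f (z k) - f (z i)) ^ 2 :=
            Finset.sum_le_sum_of_subset_of_nonneg (Finset.erase_subset _ _)
              fun k _ _ => sq_nonneg _
        _ ≤ ∑ _k : Fin N, (4:ℝ) := Finset.sum_le_sum fun k _ => hterm f hf _ _
        _ = 4 * N := by simp [mul_comm]
    have hb2 : (∑ l, (f (z i) - f (z l)) ^ 2) ≤ 4 * N := by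
      calc _ ≤ ∑ _l : Fin N, (4:ℝ) := Finset.sum_le_sum fun l _ => hterm f hf _ _
        _ = 4 * N := by simp [mul_comm]
    linarith
  -- the sup families and their bounds
  have hBQ : ∀ z : Fin N → E, BddAbove (Set.range fun f : F =>
      ∑ i, ((f : E → ℝ) (z i) - (1 / (N : ℝ)) * ∑ j, (f : E → ℝ) (z j)) ^ 2) := by
    intro z
    refine ⟨2 * N, ?_⟩
    rintro _ ⟨f, rfl⟩
    dsimp only
    rw [hQ]
    have := hS_le f f.2 z
    have h1 : (1 / (2 * (N : ℝ))) * Sfull (f : E → ℝ) z ≤ (1 / (2 * (N : ℝ))) * (4 * N ^ 2) := by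
      apply mul_le_mul_of_nonneg_left this
      positivity
    calc (1 / (2 * (N : ℝ))) * Sfull (f : E → ℝ) z ≤ (1 / (2 * (N : ℝ))) * (4 * N ^ 2) := h1
      _ = 2 * N := by field_simp; ring
  have hBT : ∀ (i : Fin N) (z : Fin N → E), BddAbove (Set.range fun f : F =>
      (1 / (2 * (N : ℝ))) * Tsub i (f : E → ℝ) z) := by
    intro i z
    refine ⟨2 * N, ?_⟩
    rintro _ ⟨f, rfl⟩
    have h1 : Tsub i (f : E → ℝ) z ≤ 4 * N ^ 2 := (hT_le_S i _ z).trans (hS_le f f.2 z)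
    calc (1 / (2 * (N : ℝ))) * Tsub i (f : E → ℝ) z ≤ (1 / (2 * (N : ℝ))) * (4 * N ^ 2) := by
          apply mul_le_mul_of_nonneg_left h1; positivity
      _ = 2 * N := by field_simp; ring
  -- the candidate g
  set V : (Fin N → E) → ℝ := fun z =>
    ⨆ f : F, ∑ i, ((f : E → ℝ) (z i) - (1 / (N : ℝ)) * ∑ j, (f : E → ℝ) (z j)) ^ 2 with hV
  set g : Fin N → (Fin N → E) → ℝ := fun i z =>
    (⨆ f : F, (1 / (2 * (N : ℝ))) * Tsub i (f : E → ℝ) z) / 4 with hg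
  have hgle : ∀ (i : Fin N) (z : Fin N → E) (f : F),
      (1 / (2 * (N : ℝ))) * Tsub i (f : E → ℝ) z ≤ 4 * g i z := by
    intro i z f
    have h := le_ciSup (hBT i z) f
    rw [hg]
    linarith
  refine ⟨g, ?_, ?_, ?_⟩
  · -- independence of i-th coordinate
    intro i x y hxy
    have : ∀ f : F, Tsub i (f : E → ℝ) x = Tsub i (f : E → ℝ) y := by
      intro f
      unfold Tsub
      refine Finset.sum_congr rfl fun k hk => Finset.sum_congr rfl fun l hl => ?_
      rw [hxy k (Finset.ne_of_mem_erase hk), hxy l (Finset.ne_of_mem_erase hl)]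
    simp only [hg]
    congr 1
    exact iSup_congr fun f => by rw [this f]
  · -- 0 ≤ V/4 - g ≤ 1
    intro i z
    constructor
    · have h1 : (⨆ f : F, (1 / (2 * (N : ℝ))) * Tsub i (f : E → ℝ) z) ≤ V z := by
        refine ciSup_le fun f => ?_
        have h2 : (1 / (2 * (N : ℝ))) * Tsub i (f : E → ℝ) z
            ≤ ∑ j, ((f : E → ℝ) (z j) - (1 / (N : ℝ)) * ∑ j', (f : E → ℝ) (z j')) ^ 2 := by
          rw [hQ]
          apply mul_le_mul_of_nonneg_left (hT_le_S i _ z)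
          positivity
        exact h2.trans (le_ciSup (hBQ z) f)
      simp only [hg, hV] at h1 ⊢
      linarith
    · have h1 : V z ≤ (⨆ f : F, (1 / (2 * (N : ℝ))) * Tsub i (f : E → ℝ) z) + 4 := by
        refine ciSup_le fun f => ?_
        have h2 : ∑ j, ((f : E → ℝ) (z j) - (1 / (N : ℝ)) * ∑ j', (f : E → ℝ) (z j')) ^ 2
            ≤ (1 / (2 * (N : ℝ))) * Tsub i (f : E → ℝ) z + 4 := by
          rw [hQ]
          have h3 := hS_le_T i (f : E → ℝ) f.2 z
          have h4 : (1 / (2 * (N : ℝ))) * Sfull (f : E → ℝ) z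
              ≤ (1 / (2 * (N : ℝ))) * (Tsub i (f : E → ℝ) z + 8 * N) := by
            apply mul_le_mul_of_nonneg_left h3; positivity
          calc (1 / (2 * (N : ℝ))) * Sfull (f : E → ℝ) z
              ≤ (1 / (2 * (N : ℝ))) * (Tsub i (f : E → ℝ) z + 8 * N) := h4
            _ = (1 / (2 * (N : ℝ))) * Tsub i (f : E → ℝ) z + 4 := by field_simp; ring
        exact h2.trans (by linarith [le_ciSup (hBT i z) f])
      simp only [hg, hV] at h1 ⊢
      linarith
  · -- the self-bounding sum inequality
    intro z
    have hkey : V z ≤ ((∑ i, 4 * g i z) + 2 * V z) / N := by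
      refine ciSup_le fun f => ?_
      have hsum := sum_Tsub (E := E) (f : E → ℝ) z
      -- ∑ i (S - T i) = 2 S  ⇒  N * Q = ∑ (1/2N) T i + 2 Q
      have hNQ : (N : ℝ) * ((1 / (2 * (N : ℝ))) * Sfull (f : E → ℝ) z)
          = (∑ i, (1 / (2 * (N : ℝ))) * Tsub i (f : E → ℝ) z)
            + 2 * ((1 / (2 * (N : ℝ))) * Sfull (f : E → ℝ) z) := by
        have : ∑ i, (1 / (2 * (N : ℝ))) * Tsub i (f : E → ℝ) z
            = (1 / (2 * (N : ℝ))) * ∑ i, Tsub i (f : E → ℝ) z := by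
          rw [Finset.mul_sum]
        rw [this]
        have hT : ∑ i, Tsub i (f : E → ℝ) z = (N : ℝ) * Sfull (f : E → ℝ) z - 2 * Sfull (f : E → ℝ) z := by
          have := sum_Tsub (E := E) (f : E → ℝ) z
          rw [Finset.sum_sub_distrib, Finset.sum_const, Finset.card_univ, Fintype.card_fin,
            nsmul_eq_mul] at this
          linarith
        rw [hT]
        field_simp
        ring
      have hle : ∀ i : Fin N, (1 / (2 * (N : ℝ))) * Tsub i (f : E → ℝ) z ≤ 4 * g i z :=
        fun i => hgle i z f
      have hQle : (1 / (2 * (N : ℝ))) * Sfull (f : E → ℝ) z ≤ V z := by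
        rw [← hQ]
        exact le_ciSup (hBQ z) f
      have hsum_le : (∑ i, (1 / (2 * (N : ℝ))) * Tsub i (f : E → ℝ) z) ≤ ∑ i, 4 * g i z :=
        Finset.sum_le_sum fun i _ => hle i
      rw [hQ, le_div_iff₀ hN0]
      nlinarith [hQle, hsum_le, hNQ]
    rw [le_div_iff₀ hN0] at hkey
    have hsum_eq : ∑ i, (V z / 4 - g i z) = (N : ℝ) * (V z / 4) - ∑ i, g i z := by
      rw [Finset.sum_sub_distrib, Finset.sum_const, Finset.card_univ, Fintype.card_fin,
        nsmul_eq_mul]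
    have h4g : ∑ i, 4 * g i z = 4 * ∑ i, g i z := by rw [Finset.mul_sum]
    show ∑ i, (V z / 4 - g i z) ≤ 2 * (V z / 4) + 0
    rw [hsum_eq]
    linarith [hkey, h4g]
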